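/- Ben-David generalization bound: with 0-1 loss, for any hypothesis class H of measurable functions X → Y and any h ∈ H, ε^t(h) ≤ ε^s(h) + d_{HΔH} + λ_H, where d_{HΔH} = sup_{h',h''∈H} |ε^s(h',h'') − ε^t(h',h'')| is the HΔH-discrepancy between the source and target X-marginals, and λ_H = inf_{h'∈H} (ε^s(h') + ε^t(h')) is the ideal joint risk. -/
import Mathlib

open MeasureTheory

noncomputable def risk {X Y : Type*} [MeasurableSpace X] [MeasurableSpace Y]
    (D : Measure (X × Y)) (h : X → Y) : ℝ :=
  (D {z | h z.1 ≠ z.2}).toReal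

noncomputable def disag {X Y : Type*} [MeasurableSpace X] [MeasurableSpace Y]
    (D : Measure (X × Y)) (h h' : X → Y) : ℝ :=
  (D.fst {x | h x ≠ h' x}).toReal

section aux

variable {X Y : Type*} [MeasurableSpace X] [MeasurableSpace Y]

lemma risk_nonneg (D : Measure (X × Y)) (h : X → Y) : 0 ≤ risk D h :=
  ENNReal.toReal_nonneg

lemma disag_nonneg (D : Measure (X × Y)) (h h' : X → Y) : 0 ≤ disag D h h' :=
  ENNReal.toReal_nonneg

lemma risk_le_one (D : Measure (X × Y)) [IsProbabilityMeasure D] (h : X → Y) :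
    risk D h ≤ 1 := by
  have := prob_le_one (μ := D) (s := {z | h z.1 ≠ z.2})
  simpa [risk] using ENNReal.toReal_le_of_le_ofReal zero_le_one (by simpa using this)

lemma disag_le_one (D : Measure (X × Y)) [IsProbabilityMeasure D] (h h' : X → Y) :
    disag D h h' ≤ 1 := by
  have := prob_le_one (μ := D.fst) (s := {x | h x ≠ h' x})
  simpa [disag] using ENNReal.toReal_le_of_le_ofReal zero_le_one (by simpa using this)

/-- Triangle-type inequality: `ε(h) ≤ ε(h') + ε(h,h')`. -/
lemma risk_le_risk_add_disag (D : Measure (X × Y)) [IsFiniteMeasure D] (h h' : X → Y) :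
    risk D h ≤ risk D h' + disag D h h' := by
  have key : D {z | h z.1 ≠ z.2}
      ≤ D {z | h' z.1 ≠ z.2} + D.fst {x | h x ≠ h' x} := by
    have hsub : {z : X × Y | h z.1 ≠ z.2}
        ⊆ {z : X × Y | h' z.1 ≠ z.2} ∪ (Prod.fst ⁻¹' {x | h x ≠ h' x}) := by
      rintro ⟨x, y⟩ hz
      by_cases hxy : h' x = y
      · right
        simp only [Set.mem_preimage, Set.mem_setOf_eq]
        intro hcon
        exact hz (by simp only [Set.mem_setOf_eq] at hz ⊢; rw [hcon, hxy]) |>.elim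
      · left; exact hxy
    calc D {z | h z.1 ≠ z.2} ≤ D ({z | h' z.1 ≠ z.2} ∪ (Prod.fst ⁻¹' {x | h x ≠ h' x})) :=
          measure_mono hsub
      _ ≤ D {z | h' z.1 ≠ z.2} + D (Prod.fst ⁻¹' {x | h x ≠ h' x}) := measure_union_le _ _
      _ ≤ D {z | h' z.1 ≠ z.2} + D.fst {x | h x ≠ h' x} := by
          gcongr
          exact Measure.le_map_apply measurable_fst.aemeasurable _
  have h1 : D {z | h z.1 ≠ z.2} ≠ ⊤ := measure_ne_top _ _
  have h2 : D {z | h' z.1 ≠ z.2} ≠ ⊤ := measure_ne_top _ _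
  have h3 : D.fst {x | h x ≠ h' x} ≠ ⊤ := measure_ne_top _ _
  have := ENNReal.toReal_mono (by simp [ENNReal.add_ne_top, h2, h3]) key
  rwa [ENNReal.toReal_add h2 h3] at this

/-- `ε(h,h') ≤ ε(h) + ε(h')`, proved without measurability of `{h ≠ h'}` via a
measurable hull trick. -/
lemma disag_le_risk_add_risk (D : Measure (X × Y)) [IsFiniteMeasure D]
    {h h' : X → Y} (hmh : Measurable h) :
    disag D h h' ≤ risk D h + risk D h' := by
  set A : Set (X × Y) := {z | h z.1 ≠ z.2} with hA
  set A' : Set (X × Y) := {z | h' z.1 ≠ z.2} with hA'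
  set V : Set (X × Y) := toMeasurable D A' with hV
  have hVmeas : MeasurableSet V := measurableSet_toMeasurable _ _
  have hg : Measurable fun x : X => (x, h x) := measurable_id.prodMk hmh
  set T : Set X := (fun x : X => (x, h x)) ⁻¹' V with hT
  have hTmeas : MeasurableSet T := hg hVmeas
  have hST : {x | h x ≠ h' x} ⊆ T := by
    intro x hx
    have : (x, h x) ∈ A' := fun hc => hx (by simpa using hc.symm)
    exact subset_toMeasurable D A' this
  have key : D.fst {x | h x ≠ h' x} ≤ D A + D A' := by
    calc D.fst {x | h x ≠ h' x} ≤ D.fst T := measure_mono hST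
      _ = D (Prod.fst ⁻¹' T) := Measure.fst_apply hTmeas
      _ ≤ D (A ∪ V) := by
          apply measure_mono
          rintro ⟨x, y⟩ hz
          simp only [Set.mem_preimage, hT] at hz
          by_cases hy : y = h x
          · right; rw [hy]; exact hz
          · left; exact fun hc => hy (by simpa using hc.symm) |>.elim
      _ ≤ D A + D V := measure_union_le _ _
      _ = D A + D A' := by rw [hV, measure_toMeasurable]
  have h1 : D A ≠ ⊤ := measure_ne_top _ _
  have h2 : D A' ≠ ⊤ := measure_ne_top _ _
  have := ENNReal.toReal_mono (by simp [ENNReal.add_ne_top, h1, h2]) key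
  rwa [ENNReal.toReal_add h1 h2] at this

end aux

/-- Ben-David generalization bound:
`ε^t(h) ≤ ε^s(h) + d_{HΔH} + λ_H`. -/
theorem ben_david_bound
    {X Y : Type*} [MeasurableSpace X] [MeasurableSpace Y] [MeasurableSingletonClass Y]
    (p q : Measure (X × Y)) [IsProbabilityMeasure p] [IsProbabilityMeasure q]
    (H : Set (X → Y)) (hne : H.Nonempty) (hmeas : ∀ h ∈ H, Measurable h)
    (h : X → Y) (hh : h ∈ H) :
    risk q h ≤ risk p h
      + sSup ((fun hp : (X → Y) × (X → Y) => |disag p hp.1 hp.2 - disag q hp.1 hp.2|) '' (H ×ˢ H))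
      + sInf ((fun h' => risk p h' + risk q h') '' H) := by
  set d := sSup ((fun hp : (X → Y) × (X → Y) =>
    |disag p hp.1 hp.2 - disag q hp.1 hp.2|) '' (H ×ˢ H)) with hd
  set lam := sInf ((fun h' => risk p h' + risk q h') '' H) with hlam
  have hbdd : BddAbove ((fun hp : (X → Y) × (X → Y) =>
      |disag p hp.1 hp.2 - disag q hp.1 hp.2|) '' (H ×ˢ H)) := by
    refine ⟨2, ?_⟩
    rintro x ⟨⟨h1, h2⟩, -, rfl⟩
    have a1 := disag_nonneg p h1 h2
    have a2 := disag_le_one p h1 h2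
    have b1 := disag_nonneg q h1 h2
    have b2 := disag_le_one q h1 h2
    rw [abs_le]; constructor <;> linarith
  refine le_of_forall_pos_le_add fun ε hε => ?_
  obtain ⟨a, ⟨g, hgH, rfl⟩, hlt⟩ := Real.lt_sInf_add_pos (hne.image _) hε
  have h1 : risk q h ≤ risk q g + disag q h g := risk_le_risk_add_disag q h g
  have h2 : disag p h g ≤ risk p h + risk p g :=
    disag_le_risk_add_risk p (hmeas h hh)
  have h3 : |disag p h g - disag q h g| ≤ d := by
    apply le_csSup hbdd
    exact ⟨(h, g), ⟨hh, hgH⟩, rfl⟩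
  have h4 : disag q h g - disag p h g ≤ |disag p h g - disag q h g| := by
    rw [abs_sub_comm]; exact le_abs_self _
  have h5 : risk p g + risk q g < lam + ε := hlt
  linarith
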